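/- If X is a locally compact T₀ space, then every Scott-open subset of K(X) (with respect to the Smyth order) is open in the upper Vietoris topology on K(X). -/

import Mathlib

open Set Topology TopologicalSpace

universe u v

/-- A subset of a topological space is *saturated* if it equals the intersection of the
open sets containing it. -/
def IsSat {X : Type u} [TopologicalSpace X] (A : Set X) : Prop :=
  A = ⋂₀ {U : Set X | IsOpen U ∧ A ⊆ U}

/-- The saturation `↑a` of a point `a` : the intersection of all open sets containing `a`. -/
def satPt {X : Type u} [TopologicalSpace X] (a : X) : Set X :=
  ⋂₀ {U : Set X | IsOpen U ∧ a ∈ U}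

/-- `KS X` is the collection of all nonempty compact saturated subsets of `X`. -/
def KS (X : Type u) [TopologicalSpace X] : Type u :=
  {K : Set X // K.Nonempty ∧ IsCompact K ∧ IsSat K}

/-- The *Smyth order* on `KS X` : `K ≤ L` iff `L ⊆ K` (reverse inclusion). -/
instance KS.instPartialOrder {X : Type u} [TopologicalSpace X] : PartialOrder (KS X) where
  le K L := L.1 ⊆ K.1
  le_refl K := subset_rfl
  le_trans K L M h₁ h₂ := by intro x hx; exact h₁ (h₂ hx)
  le_antisymm K L h₁ h₂ := by exact Subtype.ext (subset_antisymm h₂ h₁)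

/-- The *upper Vietoris topology* on `KS X`, generated by the sets `□U = {K | K ⊆ U}`
for `U` open in `X`.  The resulting space is the Smyth power space `P_S(X)`. -/
def upperVietoris (X : Type u) [TopologicalSpace X] : TopologicalSpace (KS X) :=
  TopologicalSpace.generateFrom
    {S : Set (KS X) | ∃ U : Set X, IsOpen U ∧ S = {K : KS X | K.1 ⊆ U}}

/-- Scott-open subsets of a preorder: upper sets inaccessible by suprema of
(nonempty) directed sets. -/
def ScottOpen {P : Type u} [Preorder P] (U : Set P) : Prop :=
  IsUpperSet U ∧ ∀ d : Set P, d.Nonempty → DirectedOn (· ≤ ·) d →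
    ∀ a : P, IsLUB d a → a ∈ U → (d ∩ U).Nonempty

/-- The Scott topology of a preorder. -/
def scottTop (P : Type u) [Preorder P] : TopologicalSpace P where
  IsOpen := ScottOpen
  isOpen_univ := ⟨isUpperSet_univ, fun d hd _ _ _ _ => by simpa using hd⟩
  isOpen_inter := by
    rintro U V ⟨hUu, hUd⟩ ⟨hVu, hVd⟩
    refine ⟨hUu.inter hVu, fun d hd hdir a ha haUV => ?_⟩
    obtain ⟨x, hxd, hxU⟩ := hUd d hd hdir a ha haUV.1
    obtain ⟨y, hyd, hyV⟩ := hVd d hd hdir a ha haUV.2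
    obtain ⟨z, hzd, hxz, hyz⟩ := hdir x hxd y hyd
    exact ⟨z, hzd, hUu hxz hxU, hVu hyz hyV⟩
  isOpen_sUnion := by
    intro S hS
    refine ⟨isUpperSet_sUnion fun s hs => (hS s hs).1, fun d hd hdir a ha haU => ?_⟩
    obtain ⟨t, htS, hat⟩ := haU
    obtain ⟨x, hxd, hxt⟩ := (hS t htS).2 d hd hdir a ha hat
    exact ⟨x, hxd, t, htS, hxt⟩

/-- A topological space is *well-filtered* if for every nonempty family of nonempty compact
saturated sets which is filtered under reverse inclusion and every open `U` containing the
intersection of the family, some member of the family is contained in `U`. -/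
def WellFiltered (X : Type u) [TopologicalSpace X] : Prop :=
  ∀ 𝒦 : Set (Set X), 𝒦.Nonempty →
    (∀ K ∈ 𝒦, K.Nonempty ∧ IsCompact K ∧ IsSat K) →
    (∀ K₁ ∈ 𝒦, ∀ K₂ ∈ 𝒦, ∃ K₃ ∈ 𝒦, K₃ ⊆ K₁ ∧ K₃ ⊆ K₂) →
    ∀ U : Set X, IsOpen U → ⋂₀ 𝒦 ⊆ U → ∃ K ∈ 𝒦, K ⊆ U

/-- The specialization order of a topological space: `x ≤ y` iff `x ∈ cl {y}`. -/
def specLE {X : Type u} [TopologicalSpace X] (x y : X) : Prop := x ∈ closure {y}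

/-- Least upper bound with respect to an explicit relation. -/
def RelLUB {P : Type u} (r : P → P → Prop) (d : Set P) (a : P) : Prop :=
  (∀ x ∈ d, r x a) ∧ ∀ b : P, (∀ x ∈ d, r x b) → r a b

/-- Scott openness with respect to an explicit relation. -/
def RelScottOpen {P : Type u} (r : P → P → Prop) (U : Set P) : Prop :=
  (∀ ⦃x y : P⦄, x ∈ U → r x y → y ∈ U) ∧
  ∀ d : Set P, d.Nonempty → DirectedOn r d → ∀ a : P, RelLUB r d a → a ∈ U → (d ∩ U).Nonempty

/-- A `d`-space (monotone convergence space): the specialization order is directed complete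
and every open set is Scott open with respect to the specialization order. -/
def DSpace (X : Type u) [TopologicalSpace X] : Prop :=
  (∀ d : Set X, d.Nonempty → DirectedOn specLE d → ∃ a : X, RelLUB specLE d a) ∧
  ∀ U : Set X, IsOpen U → RelScottOpen specLE U

/-- A space is *sober* if every irreducible closed set is the closure of a unique point. -/
def SoberSp (Z : Type u) [TopologicalSpace Z] : Prop :=
  ∀ A : Set Z, IsClosed A → IsIrreducible A → ∃! z : Z, A = closure {z}

/-- A closed set `A` is a *Rudin set* if there is a (nonempty) family of nonempty compact
saturated sets, filtered under reverse inclusion, such that `A` is a minimal closed set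
meeting every member of the family. -/
def RudinSet {X : Type u} [TopologicalSpace X] (A : Set X) : Prop :=
  IsClosed A ∧
  ∃ 𝒦 : Set (Set X), 𝒦.Nonempty ∧
    (∀ K ∈ 𝒦, K.Nonempty ∧ IsCompact K ∧ IsSat K) ∧
    (∀ K₁ ∈ 𝒦, ∀ K₂ ∈ 𝒦, ∃ K₃ ∈ 𝒦, K₃ ⊆ K₁ ∧ K₃ ⊆ K₂) ∧
    (∀ K ∈ 𝒦, (A ∩ K).Nonempty) ∧
    (∀ B : Set X, IsClosed B → (∀ K ∈ 𝒦, (B ∩ K).Nonempty) → B ⊆ A → B = A)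

/-- A *Rudin space*: every irreducible closed subset is a Rudin set. -/
def RudinSpace (X : Type u) [TopologicalSpace X] : Prop :=
  ∀ A : Set X, IsClosed A → IsIrreducible A → RudinSet A

/-- A closed set `A` is *well-filtered determined* (WD) if every continuous map into a
well-filtered T₀ space sends it to a set whose closure is a point closure. -/
def WDSet {X : Type u} [TopologicalSpace X] (A : Set X) : Prop :=
  ∀ (Y : Type v) [TopologicalSpace Y] [T0Space Y], WellFiltered Y →
    ∀ f : X → Y, Continuous f → ∃ y : Y, closure (f '' A) = closure {y}

/-- A *well-filtered determined (WD) space*: every irreducible closed subset is WD. -/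
def WDSpace (X : Type u) [TopologicalSpace X] : Prop :=
  ∀ A : Set X, IsClosed A → IsIrreducible A → WDSet.{u, v} A

/-- Property S: for every irreducible closed set `A`, the family `{↑a : a ∈ A}` is an
irreducible subset of the Scott power space `Σ K(X)`, or
`◇A = {K ∈ K(X) : K ∩ A ≠ ∅}` is an irreducible closed subset of `Σ K(X)`. -/
def PropertyS (X : Type u) [TopologicalSpace X] : Prop :=
  ∀ A : Set X, IsClosed A → IsIrreducible A →
    @IsIrreducible (KS X) (scottTop (KS X)) {K : KS X | ∃ a ∈ A, K.1 = satPt a} ∨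
    (@IsClosed (KS X) (scottTop (KS X)) {K : KS X | (K.1 ∩ A).Nonempty} ∧
      @IsIrreducible (KS X) (scottTop (KS X)) {K : KS X | (K.1 ∩ A).Nonempty})

/-- The order of Jia's dcpo on `ℕ × ℕ × (ℕ ∪ {∞})`:
`(i₁,j₁,k₁) ≤ (i₂,j₂,k₂)` iff (`i₁ = i₂`, `j₁ = j₂` and `k₁ ≤ k₂`) or
(`i₂ = i₁ + 1`, `k₁ ≤ j₂` and `k₂ = ∞`). -/
def LJiaLE (a b : ℕ × ℕ × WithTop ℕ) : Prop :=
  (a.1 = b.1 ∧ a.2.1 = b.2.1 ∧ a.2.2 ≤ b.2.2) ∨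
  (b.1 = a.1 + 1 ∧ a.2.2 ≤ (b.2.1 : WithTop ℕ) ∧ b.2.2 = ⊤)

/-- Saturation of a set. -/
def satS {X : Type u} [TopologicalSpace X] (Q : Set X) : Set X :=
  ⋂₀ {V : Set X | IsOpen V ∧ Q ⊆ V}

lemma subset_satS {X : Type u} [TopologicalSpace X] (Q : Set X) : Q ⊆ satS Q :=
  fun _ hx _ hV => hV.2 hx

lemma satS_subset {X : Type u} [TopologicalSpace X] {Q V : Set X} (hV : IsOpen V)
    (h : Q ⊆ V) : satS Q ⊆ V :=
  fun _ hx => hx V ⟨hV, h⟩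

lemma isCompact_satS {X : Type u} [TopologicalSpace X] {Q : Set X} (hQ : IsCompact Q) :
    IsCompact (satS Q) := by
  apply isCompact_of_finite_subcover
  intro ι W hWo hcov
  obtain ⟨t, ht⟩ := hQ.elim_finite_subcover W hWo ((subset_satS Q).trans hcov)
  exact ⟨t, satS_subset (isOpen_biUnion fun i _ => hWo i) ht⟩

lemma isSat_satS {X : Type u} [TopologicalSpace X] (Q : Set X) : IsSat (satS Q) := by
  apply subset_antisymm
  · intro x hx V hV
    exact hV.2 hx
  · intro x hx V hV
    exact hx V ⟨hV.1, satS_subset hV.1 hV.2⟩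

/-- The compact saturated neighborhood (after saturation) of a compact set `K`
fitting inside an open `V ⊇ K`, as an element of `KS X`. -/
lemma exists_KS_between {X : Type u} [TopologicalSpace X] [LocallyCompactSpace X]
    (K : KS X) {V : Set X} (hV : IsOpen V) (hKV : K.1 ⊆ V) :
    ∃ L : KS X, K.1 ⊆ interior L.1 ∧ L.1 ⊆ V := by
  obtain ⟨Kne, Kcpt, _⟩ := K.2
  obtain ⟨Q, hQc, hQi, hQV⟩ := exists_compact_between Kcpt hV hKV
  refine ⟨⟨satS Q, Kne.mono ((hQi.trans interior_subset).trans (subset_satS Q)),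
    isCompact_satS hQc, isSat_satS Q⟩, ?_, satS_subset hV hQV⟩
  exact hQi.trans (interior_mono (subset_satS Q))

/-- If `X` is a locally compact `T₀` space, then every Scott-open subset of
`K(X)` (with respect to the Smyth order) is open in the upper Vietoris topology. -/
theorem stmt2 {X : Type u} [TopologicalSpace X] [T0Space X] [LocallyCompactSpace X]
    (U : Set (KS X)) (hU : ScottOpen U) :
    @IsOpen (KS X) (upperVietoris X) U := by
  obtain ⟨hup, hsc⟩ := hU
  have hbasic : ∀ K ∈ U, ∃ V : Set X, IsOpen V ∧ K.1 ⊆ V ∧ {M : KS X | M.1 ⊆ V} ⊆ U := by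
    intro K hK
    obtain ⟨Kne, Kcpt, Ksat⟩ := K.2
    set d : Set (KS X) := {L : KS X | K.1 ⊆ interior L.1} with hd
    have dne : d.Nonempty := by
      obtain ⟨L, hL, _⟩ := exists_KS_between K isOpen_univ (subset_univ _)
      exact ⟨L, hL⟩
    have ddir : DirectedOn (· ≤ ·) d := by
      intro L₁ h₁ L₂ h₂
      obtain ⟨L₃, hL₃, hsub⟩ := exists_KS_between K
        (isOpen_interior.inter isOpen_interior) (subset_inter h₁ h₂)
      exact ⟨L₃, hL₃,
        (hsub.trans (inter_subset_left)).trans interior_subset,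
        (hsub.trans (inter_subset_right)).trans interior_subset⟩
    have hlub : IsLUB d K := by
      constructor
      · intro L hL
        exact (show K.1 ⊆ L.1 from Set.Subset.trans hL interior_subset)
      · intro b hb
        intro x hx
        rw [Ksat]
        intro V hV
        obtain ⟨L, hL, hLV⟩ := exists_KS_between K hV.1 hV.2
        exact hLV (hb hL hx)
    obtain ⟨L, hLd, hLU⟩ := hsc d dne ddir K hlub hK
    refine ⟨interior L.1, isOpen_interior, hLd, ?_⟩
    intro M hM
    exact hup (show M.1 ⊆ L.1 from Set.Subset.trans hM interior_subset) hLU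
  choose V hVo hKV hVU using hbasic
  have hUeq : U = ⋃ K : U, {M : KS X | M.1 ⊆ V K K.2} := by
    ext M
    constructor
    · intro hM
      exact mem_iUnion.2 ⟨⟨M, hM⟩, hKV M hM⟩
    · intro hM
      obtain ⟨K, hK⟩ := mem_iUnion.1 hM
      exact hVU K K.2 hK
  rw [hUeq]
  apply @isOpen_iUnion _ _ (upperVietoris X)
  intro K
  exact TopologicalSpace.GenerateOpen.basic _ ⟨V K K.2, hVo K K.2, rfl⟩
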